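/- Given a lax V-monoidal functor (R, ρ^R) : A → B between rigid tensored V-monoidal categories, the family r_v := mate(η_v^{F_A} ≫ R_{1_A → F_A(v)}) : F_B(v) → R(F_A(v)) is a natural transformation F_B ⇒ R ∘ F_A: for every f : u → v in V, F_B(f) ≫ r_v = r_u ≫ R(F_A(f)). -/

import Mathlib

open CategoryTheory MonoidalCategory

universe w w' v u

variable (V : Type u) [Category.{v} V] [MonoidalCategory V] [BraidedCategory V]

/-- A (strict) monoidal structure on a `V`-enriched category: the data and axioms of a
`V`-monoidal category over the braided monoidal category `V`. -/
structure VMonStruct (C : Type w) [EnrichedCategory V C] where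
  tUnit : C
  tObj : C → C → C
  tHom : ∀ a b c d : C, ((a ⟶[V] c) ⊗ (b ⟶[V] d)) ⟶ ((tObj a b) ⟶[V] (tObj c d))
  unit_tensor : ∀ a, tObj tUnit a = a
  tensor_unit : ∀ a, tObj a tUnit = a
  tensor_assoc : ∀ a b c, tObj (tObj a b) c = tObj a (tObj b c)
  left_unitality : ∀ a b : C,
    (λ_ (a ⟶[V] b)).inv ≫ (eId V tUnit ⊗ₘ 𝟙 (a ⟶[V] b)) ≫ tHom tUnit a tUnit b =
      eqToHom (by rw [unit_tensor, unit_tensor])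
  right_unitality : ∀ a b : C,
    (ρ_ (a ⟶[V] b)).inv ≫ (𝟙 (a ⟶[V] b) ⊗ₘ eId V tUnit) ≫ tHom a tUnit b tUnit =
      eqToHom (by rw [tensor_unit, tensor_unit])
  tHom_assoc : ∀ a b c d e f : C,
    (tHom a b d e ⊗ₘ 𝟙 (c ⟶[V] f)) ≫ tHom (tObj a b) c (tObj d e) f =
      (α_ (a ⟶[V] d) (b ⟶[V] e) (c ⟶[V] f)).hom ≫
        ((a ⟶[V] d) ◁ tHom b c e f) ≫ tHom a (tObj b c) d (tObj e f) ≫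
        eqToHom (by rw [tensor_assoc a b c, tensor_assoc d e f])
  braided_interchange : ∀ a b c d e f : C,
    (tHom a d b e ⊗ₘ tHom b e c f) ≫ eComp V (tObj a d) (tObj b e) (tObj c f) =
      (α_ (a ⟶[V] b) (d ⟶[V] e) ((b ⟶[V] c) ⊗ (e ⟶[V] f))).hom ≫
        ((a ⟶[V] b) ◁ (α_ (d ⟶[V] e) (b ⟶[V] c) (e ⟶[V] f)).inv) ≫
        ((a ⟶[V] b) ◁ ((β_ (d ⟶[V] e) (b ⟶[V] c)).hom ▷ (e ⟶[V] f))) ≫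
        ((a ⟶[V] b) ◁ (α_ (b ⟶[V] c) (d ⟶[V] e) (e ⟶[V] f)).hom) ≫
        (α_ (a ⟶[V] b) (b ⟶[V] c) ((d ⟶[V] e) ⊗ (e ⟶[V] f))).inv ≫
        (eComp V a b c ⊗ₘ eComp V d e f) ≫ tHom a d c f

variable {V}

section Underlying

variable {C : Type w} [EnrichedCategory V C]

/-- Composition of `𝟙_V`-graded morphisms in the underlying category. -/
def compU {a b c : C} (f : 𝟙_ V ⟶ (a ⟶[V] b)) (g : 𝟙_ V ⟶ (b ⟶[V] c)) :
    𝟙_ V ⟶ (a ⟶[V] c) :=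
  (λ_ (𝟙_ V)).inv ≫ (f ⊗ₘ g) ≫ eComp V a b c

/-- Identity `𝟙_V`-graded morphism. -/
def idU (a : C) : 𝟙_ V ⟶ (a ⟶[V] a) := eId V a

/-- The `𝟙_V`-graded morphism induced by an equality of objects. -/
def eqU {a b : C} (h : a = b) : 𝟙_ V ⟶ (a ⟶[V] b) := by
  subst h; exact idU a

/-- Tensor product of `𝟙_V`-graded morphisms in the underlying category. -/
def tU (M : VMonStruct V C) {a b c d : C}
    (f : 𝟙_ V ⟶ (a ⟶[V] c)) (g : 𝟙_ V ⟶ (b ⟶[V] d)) :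
    𝟙_ V ⟶ (M.tObj a b ⟶[V] M.tObj c d) :=
  (λ_ (𝟙_ V)).inv ≫ (f ⊗ₘ g) ≫ M.tHom a b c d

/-- The free module functor data: a left adjoint `F` of `x ↦ C(1_C → x)` together with the
main adjunction `C^V(a ⊗ F(v) → b) ≅ V(v → C(a → b))`. -/
structure FreeModule (M : VMonStruct V C) where
  F : V → C
  Fmap : ∀ {u v : V}, (u ⟶ v) → (𝟙_ V ⟶ (F u ⟶[V] F v))
  Fmap_id : ∀ v : V, Fmap (𝟙 v) = idU (F v)
  Fmap_comp : ∀ {u v w : V} (f : u ⟶ v) (g : v ⟶ w), Fmap (f ≫ g) = compU (Fmap f) (Fmap g)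
  adj : ∀ (v : V) (a b : C), (𝟙_ V ⟶ (M.tObj a (F v) ⟶[V] b)) ≃ (v ⟶ (a ⟶[V] b))
  adj_nat_right : ∀ (v : V) (a b b' : C) (x : 𝟙_ V ⟶ (M.tObj a (F v) ⟶[V] b))
      (g : 𝟙_ V ⟶ (b ⟶[V] b')),
    adj v a b' (compU x g) =
      adj v a b x ≫ (ρ_ (a ⟶[V] b)).inv ≫ ((a ⟶[V] b) ◁ g) ≫ eComp V a b b'
  adj_nat_left : ∀ {u v : V} (h : u ⟶ v) (a b : C)
      (x : 𝟙_ V ⟶ (M.tObj a (F v) ⟶[V] b)),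
    adj u a b (compU (tU M (idU a) (Fmap h)) x) = h ≫ adj v a b x

/-- The unit of the main adjunction. -/
def unitU {M : VMonStruct V C} (FM : FreeModule M) (v : V) :
    v ⟶ (M.tUnit ⟶[V] FM.F v) :=
  FM.adj v M.tUnit (FM.F v) (eqU (M.unit_tensor (FM.F v)))

/-- The counit of the main adjunction. -/
def counitU {M : VMonStruct V C} (FM : FreeModule M) (a b : C) :
    𝟙_ V ⟶ (M.tObj a (FM.F (a ⟶[V] b)) ⟶[V] b) :=
  (FM.adj (a ⟶[V] b) a b).symm (𝟙 (a ⟶[V] b))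

/-- The half-braiding `e_{a, F(v)}`, the mate of `(η_v ⊗ j_a) ≫ (−⊗−)`. -/
def hb {M : VMonStruct V C} (FM : FreeModule M) (a : C) (v : V) :
    𝟙_ V ⟶ (M.tObj a (FM.F v) ⟶[V] M.tObj (FM.F v) a) :=
  (FM.adj v a (M.tObj (FM.F v) a)).symm
    ((ρ_ v).inv ≫ (unitU FM v ⊗ₘ eId V a) ≫ M.tHom M.tUnit a (FM.F v) a ≫
      eqToHom (by rw [M.unit_tensor]))

end Underlying
section Functors

variable {C : Type w} {D : Type w'} [EnrichedCategory V C] [EnrichedCategory V D]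

/-- A strictly unital lax `V`-monoidal functor between `V`-monoidal categories. -/
structure VLaxMonFunctor (M : VMonStruct V C) (N : VMonStruct V D) where
  obj : C → D
  map : ∀ a b : C, (a ⟶[V] b) ⟶ (obj a ⟶[V] obj b)
  map_id : ∀ a : C, eId V a ≫ map a a = eId V (obj a)
  map_comp : ∀ a b c : C,
    eComp V a b c ≫ map a c = (map a b ⊗ₘ map b c) ≫ eComp V (obj a) (obj b) (obj c)
  unit_obj : obj M.tUnit = N.tUnit
  unit_id : eId V M.tUnit ≫ map M.tUnit M.tUnit = eId V N.tUnit ≫ eqToHom (by rw [unit_obj])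
  lax : ∀ a b : C, 𝟙_ V ⟶ (N.tObj (obj a) (obj b) ⟶[V] obj (M.tObj a b))
  lax_natural : ∀ a b c d : C,
    (λ_ ((a ⟶[V] c) ⊗ (b ⟶[V] d))).inv ≫
        (lax a b ⊗ₘ (M.tHom a b c d ≫ map (M.tObj a b) (M.tObj c d))) ≫
        eComp V (N.tObj (obj a) (obj b)) (obj (M.tObj a b)) (obj (M.tObj c d)) =
      (ρ_ ((a ⟶[V] c) ⊗ (b ⟶[V] d))).inv ≫
        (((map a c ⊗ₘ map b d) ≫ N.tHom (obj a) (obj b) (obj c) (obj d)) ⊗ₘ lax c d) ≫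
        eComp V (N.tObj (obj a) (obj b)) (N.tObj (obj c) (obj d)) (obj (M.tObj c d))
  lax_assoc : ∀ a b c : C,
    compU (tU N (idU (obj a)) (lax b c)) (lax a (M.tObj b c)) =
      compU (eqU (N.tensor_assoc (obj a) (obj b) (obj c)).symm)
        (compU (tU N (lax a b) (idU (obj c)))
          (compU (lax (M.tObj a b) c) (eqU (congrArg obj (M.tensor_assoc a b c)))))
  lax_unit_left : ∀ a : C,
    lax M.tUnit a = eqU (by rw [unit_obj, N.unit_tensor, M.unit_tensor])
  lax_unit_right : ∀ a : C,
    lax a M.tUnit = eqU (by rw [unit_obj, N.tensor_unit, M.tensor_unit])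

end Functors

/-- The action-coherence natural transformation `r : F_B ⇒ R ∘ F_A` associated to a strictly
unital lax `V`-monoidal functor `R`: `r_v` is the mate of `η_v^{F_A} ≫ R_{1_A → F_A(v)}`. -/
def rtrans {V : Type*} [Category V] [MonoidalCategory V] [BraidedCategory V]
    {C D : Type*} [EnrichedCategory V C] [EnrichedCategory V D]
    {M : VMonStruct V C} {N : VMonStruct V D}
    (R : VLaxMonFunctor M N) (FA : FreeModule M) (FB : FreeModule N) (v : V) :
    𝟙_ V ⟶ (FB.F v ⟶[V] R.obj (FA.F v)) :=
  compU (eqU (N.unit_tensor (FB.F v)).symm)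
    ((FB.adj v N.tUnit (R.obj (FA.F v))).symm
      (unitU FA v ≫ R.map M.tUnit (FA.F v) ≫ eqToHom (by rw [R.unit_obj])))
section MyAux
set_option linter.unusedSectionVars false
section UnderlyingLemmas

variable {C : Type w} [EnrichedCategory V C]

lemma compU_homOf {a b c : C} (f : 𝟙_ V ⟶ (a ⟶[V] b)) (g : 𝟙_ V ⟶ (b ⟶[V] c)) :
    compU f g = ForgetEnrichment.homTo V
      (ForgetEnrichment.homOf V f ≫ ForgetEnrichment.homOf V g) := by
  simp [compU, ForgetEnrichment.homTo_comp]

lemma idU_compU {a b : C} (x : 𝟙_ V ⟶ (a ⟶[V] b)) : compU (idU a) x = x := by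
  have : compU (idU a) x = ForgetEnrichment.homTo V
      (ForgetEnrichment.homOf V (eId V a) ≫ ForgetEnrichment.homOf V x) := compU_homOf _ _
  simpa [idU] using this

lemma compU_idU {a b : C} (x : 𝟙_ V ⟶ (a ⟶[V] b)) : compU x (idU b) = x := by
  have : compU x (idU b) = ForgetEnrichment.homTo V
      (ForgetEnrichment.homOf V x ≫ ForgetEnrichment.homOf V (eId V b)) := compU_homOf _ _
  simpa [idU] using this

lemma compU_assoc {a b c d : C} (x : 𝟙_ V ⟶ (a ⟶[V] b)) (y : 𝟙_ V ⟶ (b ⟶[V] c))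
    (z : 𝟙_ V ⟶ (c ⟶[V] d)) : compU (compU x y) z = compU x (compU y z) := by
  rw [compU_homOf x y, compU_homOf y z]
  rw [show compU (ForgetEnrichment.homTo V (ForgetEnrichment.homOf V x ≫ ForgetEnrichment.homOf V y)) z
      = ForgetEnrichment.homTo V ((ForgetEnrichment.homOf V x ≫ ForgetEnrichment.homOf V y) ≫ ForgetEnrichment.homOf V z) from compU_homOf _ _,
    show compU x (ForgetEnrichment.homTo V (ForgetEnrichment.homOf V y ≫ ForgetEnrichment.homOf V z))
      = ForgetEnrichment.homTo V (ForgetEnrichment.homOf V x ≫ (ForgetEnrichment.homOf V y ≫ ForgetEnrichment.homOf V z)) from compU_homOf _ _,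
    Category.assoc]

lemma eqU_compU {a b c : C} (h : a = b) (x : 𝟙_ V ⟶ (b ⟶[V] c)) :
    compU (eqU h) x = x ≫ eqToHom (by rw [h]) := by
  subst h; simp [eqU, idU_compU]

lemma compU_eqU {a b c : C} (x : 𝟙_ V ⟶ (a ⟶[V] b)) (h : b = c) :
    compU x (eqU h) = x ≫ eqToHom (by rw [h]) := by
  subst h; simp [eqU, compU_idU]

lemma tU_idU_left (M : VMonStruct V C) {a b : C} (g : 𝟙_ V ⟶ (a ⟶[V] b)) :
    tU M (idU M.tUnit) g = g ≫ eqToHom (by rw [M.unit_tensor a, M.unit_tensor b]) := by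
  have h1 : (eId V M.tUnit ⊗ₘ g) = ((𝟙 (𝟙_ V)) ⊗ₘ g) ≫ (eId V M.tUnit ⊗ₘ 𝟙 (a ⟶[V] b)) := by
    rw [tensorHom_comp_tensorHom]; simp
  rw [tU, idU, h1]
  have h2 : (λ_ (𝟙_ V)).inv ≫ ((𝟙 (𝟙_ V)) ⊗ₘ g) = g ≫ (λ_ (a ⟶[V] b)).inv := by
    simp
  slice_lhs 1 2 => rw [h2]
  simp only [Category.assoc, M.left_unitality a b]

end UnderlyingLemmas
section AuxV
lemma whisk_lemma {x y b c : V} (p : x ⟶ y) (g : 𝟙_ V ⟶ b) (q : b ⟶ c) :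
    (ρ_ x).inv ≫ (x ◁ g) ≫ (p ⊗ₘ q) = p ≫ (ρ_ y).inv ≫ (y ◁ (g ≫ q)) := by
  have h1 : (x ◁ g) ≫ (p ⊗ₘ q) = p ⊗ₘ (g ≫ q) := by
    rw [MonoidalCategory.id_tensorHom x g |>.symm, tensorHom_comp_tensorHom]; simp
  have h2 : (p ⊗ₘ (g ≫ q)) = (p ▷ 𝟙_ V) ≫ (y ◁ (g ≫ q)) := by
    rw [MonoidalCategory.tensorHom_def]
  rw [h1, h2, ← Category.assoc, ← rightUnitor_inv_naturality, Category.assoc]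
end AuxV
section AuxC
variable {C : Type w} [EnrichedCategory V C]

lemma eComp_transport {a a' : C} (h : a = a') (b c : C) (m : 𝟙_ V ⟶ (b ⟶[V] c)) :
    (ρ_ (a ⟶[V] b)).inv ≫ ((a ⟶[V] b) ◁ m) ≫ eComp V a b c ≫
        eqToHom (show ((a ⟶[V] c) : V) = (a' ⟶[V] c) by rw [h]) =
      eqToHom (show ((a ⟶[V] b) : V) = (a' ⟶[V] b) by rw [h]) ≫
        (ρ_ (a' ⟶[V] b)).inv ≫ ((a' ⟶[V] b) ◁ m) ≫ eComp V a' b c := by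
  subst h; simp

lemma unitU_natural {M : VMonStruct V C} (FM : FreeModule M) {u v : V} (f : u ⟶ v) :
    f ≫ unitU FM v =
      unitU FM u ≫ (ρ_ (M.tUnit ⟶[V] FM.F u)).inv ≫
        ((M.tUnit ⟶[V] FM.F u) ◁ FM.Fmap f) ≫ eComp V M.tUnit (FM.F u) (FM.F v) := by
  have h1 := FM.adj_nat_left f M.tUnit (FM.F v) (eqU (M.unit_tensor (FM.F v)))
  have h2 := FM.adj_nat_right u M.tUnit (FM.F u) (FM.F v)
    (eqU (M.unit_tensor (FM.F u))) (FM.Fmap f)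
  have h3 : compU (tU M (idU M.tUnit) (FM.Fmap f)) (eqU (M.unit_tensor (FM.F v))) =
      compU (eqU (M.unit_tensor (FM.F u))) (FM.Fmap f) := by
    rw [compU_eqU, eqU_compU, tU_idU_left]; simp
  unfold unitU
  rw [← h1, h3, h2]

end AuxC

section Key
variable {C : Type w} {D : Type w'} [EnrichedCategory V C] [EnrichedCategory V D]
  {M : VMonStruct V C} {N : VMonStruct V D}

lemma key_comp (R : VLaxMonFunctor M N) (FA : FreeModule M) {u v : V} (f : u ⟶ v) :
    f ≫ (unitU FA v ≫ R.map M.tUnit (FA.F v) ≫ eqToHom (by rw [R.unit_obj])) =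
      (unitU FA u ≫ R.map M.tUnit (FA.F u) ≫ eqToHom (by rw [R.unit_obj])) ≫
        (ρ_ (N.tUnit ⟶[V] R.obj (FA.F u))).inv ≫
        ((N.tUnit ⟶[V] R.obj (FA.F u)) ◁ (FA.Fmap f ≫ R.map (FA.F u) (FA.F v))) ≫
        eComp V N.tUnit (R.obj (FA.F u)) (R.obj (FA.F v)) := by
  rw [← Category.assoc f, unitU_natural]
  simp only [Category.assoc]
  rw [reassoc_of% (R.map_comp M.tUnit (FA.F u) (FA.F v))]
  rw [reassoc_of% (whisk_lemma (R.map M.tUnit (FA.F u)) (FA.Fmap f)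
    (R.map (FA.F u) (FA.F v)))]
  rw [eComp_transport (C := D) R.unit_obj (R.obj (FA.F u)) (R.obj (FA.F v))
    (FA.Fmap f ≫ R.map (FA.F u) (FA.F v))]

end Key
end MyAux


/-- Given a strictly unital lax `V`-monoidal functor `(R, ρ^R) : A → B`
between rigid tensored `V`-monoidal categories, the family
`r_v := mate(η_v^{F_A} ≫ R_{1_A → F_A(v)}) : F_B(v) ⟶ R(F_A(v))` is a natural transformation
`F_B ⇒ R ∘ F_A`: for every `f : u ⟶ v` in `V`, `F_B(f) ≫ r_v = r_u ≫ R(F_A(f))`. -/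
theorem rtrans_natural
    {V : Type*} [Category V] [MonoidalCategory V] [BraidedCategory V]
    {C D : Type*} [EnrichedCategory V C] [EnrichedCategory V D]
    {M : VMonStruct V C} {N : VMonStruct V D}
    (R : VLaxMonFunctor M N) (FA : FreeModule M) (FB : FreeModule N)
    {u v : V} (f : u ⟶ v) :
    compU (FB.Fmap f) (rtrans R FA FB v) =
      compU (rtrans R FA FB u) (FA.Fmap f ≫ R.map (FA.F u) (FA.F v)) := by

  unfold rtrans
  rw [← compU_assoc]
  have stepA : compU (FB.Fmap f) (eqU (N.unit_tensor (FB.F v)).symm) =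
      compU (eqU (N.unit_tensor (FB.F u)).symm) (tU N (idU N.tUnit) (FB.Fmap f)) := by
    rw [compU_eqU, eqU_compU, tU_idU_left]; simp
  rw [stepA, compU_assoc, compU_assoc]
  congr 1
  apply (FB.adj u N.tUnit (R.obj (FA.F v))).injective
  rw [FB.adj_nat_left, FB.adj_nat_right, Equiv.apply_symm_apply, Equiv.apply_symm_apply]
  exact key_comp R FA f
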